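/- Let B be a symmetric positive definite r×r real matrix, A an r×m real matrix, Σ a symmetric m×m real matrix with Σ − AᵀB⁻¹A positive definite, H an r×t real matrix, F an m×t real matrix, and S a symmetric positive semidefinite t×t real matrix. Then det( I_{r+m} + [H; F] · S · [H; F]ᵀ · (fromBlocks(B, A; Aᵀ, Σ))⁻¹ ) = det( I_t + S·HᵀB⁻¹H + S·(AᵀB⁻¹H − F)ᵀ(Σ − AᵀB⁻¹A)⁻¹(AᵀB⁻¹H − F) ). -/

import Mathlib

open Matrix

/-- The genie-aided determinant identity (cf. eq. (R1u) in the paper):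
`det(I + [H;F] S [H;F]ᵀ E⁻¹) = det(I + S Hᵀ B⁻¹ H + S (Aᵀ B⁻¹ H - F)ᵀ (Σ - Aᵀ B⁻¹ A)⁻¹ (Aᵀ B⁻¹ H - F))`. -/
theorem stmt2 {r m t : ℕ}
    (B : Matrix (Fin r) (Fin r) ℝ) (hB : B.PosDef)
    (A : Matrix (Fin r) (Fin m) ℝ)
    (Sg : Matrix (Fin m) (Fin m) ℝ) (hSg : Sg.IsSymm)
    (hschur : (Sg - Aᵀ * B⁻¹ * A).PosDef)
    (H : Matrix (Fin r) (Fin t) ℝ) (F : Matrix (Fin m) (Fin t) ℝ)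
    (S : Matrix (Fin t) (Fin t) ℝ) (hS : S.PosSemidef) :
    (1 + fromRows H F * S * (fromRows H F)ᵀ * (fromBlocks B A Aᵀ Sg)⁻¹).det =
      (1 + S * (Hᵀ * B⁻¹ * H) +
        S * ((Aᵀ * B⁻¹ * H - F)ᵀ * (Sg - Aᵀ * B⁻¹ * A)⁻¹ * (Aᵀ * B⁻¹ * H - F))).det := by
  haveI iB : Invertible B := hB.isUnit.invertible
  have hiB : ⅟B = B⁻¹ := invOf_eq_nonsing_inv B
  haveI iD : Invertible (Sg - Aᵀ * ⅟B * A) := by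
    rw [hiB]; exact hschur.isUnit.invertible
  haveI iE : Invertible (fromBlocks B A Aᵀ Sg) := fromBlocks₁₁Invertible B A Aᵀ Sg
  have hΔ : ⅟(Sg - Aᵀ * ⅟B * A) = (Sg - Aᵀ * B⁻¹ * A)⁻¹ := by
    rw [invOf_eq_nonsing_inv, hiB]
  have hEinv : (fromBlocks B A Aᵀ Sg)⁻¹ =
      fromBlocks (B⁻¹ + B⁻¹ * A * (Sg - Aᵀ * B⁻¹ * A)⁻¹ * Aᵀ * B⁻¹)
        (-(B⁻¹ * A * (Sg - Aᵀ * B⁻¹ * A)⁻¹))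
        (-((Sg - Aᵀ * B⁻¹ * A)⁻¹ * Aᵀ * B⁻¹)) ((Sg - Aᵀ * B⁻¹ * A)⁻¹) := by
    rw [← invOf_eq_nonsing_inv, invOf_fromBlocks₁₁_eq, hΔ, hiB]
  have hBsymm : B⁻¹ᵀ = B⁻¹ := by
    have := hB.1.inv
    simpa [Matrix.IsHermitian] using this
  have hΔsymm : (Sg - Aᵀ * B⁻¹ * A)⁻¹ᵀ = (Sg - Aᵀ * B⁻¹ * A)⁻¹ := by
    have := hschur.1.inv
    simpa [Matrix.IsHermitian] using this
  rw [Matrix.mul_assoc, Matrix.mul_assoc, Matrix.det_one_add_mul_comm, hEinv,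
    transpose_fromRows, fromCols_mul_fromBlocks, Matrix.mul_assoc S, fromCols_mul_fromRows]
  congr 1
  simp only [transpose_sub, transpose_mul, transpose_transpose, hBsymm]
  simp only [Matrix.mul_add, Matrix.add_mul, Matrix.mul_sub, Matrix.sub_mul,
    Matrix.neg_mul, Matrix.mul_neg, Matrix.mul_assoc]
  abel
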